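/- A 2×2 real Markov matrix M is embeddable (i.e., there exists a 2×2 real matrix Q with nonnegative off-diagonal entries and rows summing to zero such that exp(Q) = M) if and only if det(M) > 0, equivalently trace(M) > 1. -/

import Mathlib

open Matrix

/-- A Markov matrix: nonnegative entries, rows summing to one. -/
def IsMarkov {n : ℕ} (M : Matrix (Fin n) (Fin n) ℝ) : Prop :=
  (∀ i j, 0 ≤ M i j) ∧ ∀ i, ∑ j, M i j = 1

/-- A rate matrix: nonnegative off-diagonal entries, rows summing to zero. -/
def IsRate {n : ℕ} (Q : Matrix (Fin n) (Fin n) ℝ) : Prop :=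
  (∀ i j, i ≠ j → 0 ≤ Q i j) ∧ ∀ i, ∑ j, Q i j = 0

open scoped Nat

/-- exp of a scalar multiple of an idempotent 2×2 matrix. -/
lemma exp_smul_idem (c : ℝ) (P : Matrix (Fin 2) (Fin 2) ℝ) (hP : P * P = P) :
    NormedSpace.exp (c • P) = 1 + (Real.exp c - 1) • P := by
  letI : SeminormedRing (Matrix (Fin 2) (Fin 2) ℝ) := Matrix.linftyOpSemiNormedRing
  letI : NormedRing (Matrix (Fin 2) (Fin 2) ℝ) := Matrix.linftyOpNormedRing
  letI : NormedAlgebra ℝ (Matrix (Fin 2) (Fin 2) ℝ) := Matrix.linftyOpNormedAlgebra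
  have hpow : ∀ n : ℕ, P ^ (n + 1) = P := by
    intro n; induction n with
    | zero => simp
    | succ n ih => rw [pow_succ, ih, hP]
  have hsum : Summable fun n : ℕ => ((n ! : ℝ))⁻¹ • (c • P) ^ n :=
    NormedSpace.expSeries_summable' (𝕂 := ℝ) (c • P)
  rw [NormedSpace.exp_eq_tsum (𝕂 := ℝ)]
  show (∑' n : ℕ, ((n ! : ℝ))⁻¹ • (c • P) ^ n) = _
  rw [Summable.tsum_eq_zero_add hsum]
  have h1 : ∀ n : ℕ, (((n+1) ! : ℝ))⁻¹ • (c • P) ^ (n+1)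
      = (c ^ (n+1) / (n+1)!) • P := by
    intro n
    rw [smul_pow, hpow, smul_smul]
    ring_nf
  simp_rw [h1]
  have hs2 : Summable fun n : ℕ => c ^ (n+1) / (n+1)! := by
    have := Real.summable_pow_div_factorial c
    exact (this.comp_injective (add_left_injective 1))
  rw [Summable.tsum_smul_const hs2]
  have hexp : Real.exp c = ∑' n : ℕ, c ^ n / n ! := by
    rw [Real.exp_eq_exp_ℝ, NormedSpace.exp_eq_tsum_div]
  have hsc : Summable fun n : ℕ => c ^ n / n ! := by
    simpa [div_eq_mul_inv, mul_comm] using Real.summable_pow_div_factorial c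
  have hsplit : (∑' n : ℕ, c ^ n / n !) = c ^ 0 / 0! + ∑' n : ℕ, c ^ (n+1) / (n+1)! :=
    Summable.tsum_eq_zero_add hsc
  have : (∑' n : ℕ, c ^ (n+1) / (n+1)!) = Real.exp c - 1 := by
    rw [hexp, hsplit]; simp
  rw [this]
  simp

lemma idemP (p q s : ℝ) (hs : p + q = s) (h : s ≠ 0) :
    (!![p/s, -(p/s); -(q/s), q/s] : Matrix (Fin 2) (Fin 2) ℝ) *
      !![p/s, -(p/s); -(q/s), q/s] = !![p/s, -(p/s); -(q/s), q/s] := by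
  ext i j
  fin_cases i <;> fin_cases j <;>
    simp [Matrix.mul_apply, Fin.sum_univ_two] <;> field_simp <;> subst hs <;> ring

lemma exp_cP (c p q s : ℝ) (hs : p + q = s) (hne : s ≠ 0) :
    NormedSpace.exp (c • (!![p/s, -(p/s); -(q/s), q/s] : Matrix (Fin 2) (Fin 2) ℝ)) =
      !![1 + (Real.exp c - 1)*(p/s), -((Real.exp c - 1)*(p/s));
         -((Real.exp c - 1)*(q/s)), 1 + (Real.exp c - 1)*(q/s)] := by
  rw [exp_smul_idem _ _ (idemP p q s hs hne)]
  ext i j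
  fin_cases i <;> fin_cases j <;> simp [Matrix.one_apply]

/-- A 2×2 real Markov matrix is embeddable iff `det M > 0`, equivalently `trace M > 1`. -/
theorem embeddable_two_iff (M : Matrix (Fin 2) (Fin 2) ℝ) (hM : IsMarkov M) :
    ((∃ Q : Matrix (Fin 2) (Fin 2) ℝ, IsRate Q ∧ NormedSpace.exp Q = M) ↔ 0 < M.det)
    ∧ (0 < M.det ↔ 1 < M.trace) := by
  obtain ⟨hpos, hrow⟩ := hM
  have h0 := hrow 0
  have h1 := hrow 1
  rw [Fin.sum_univ_two] at h0 h1
  have hdet : M.det = 1 - M 0 1 - M 1 0 := by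
    rw [Matrix.det_fin_two]
    have e0 : M 0 0 = 1 - M 0 1 := by linarith
    have e1 : M 1 1 = 1 - M 1 0 := by linarith
    rw [e0, e1]; ring
  have htr : M.trace = 2 - M 0 1 - M 1 0 := by
    rw [Matrix.trace_fin_two]; linarith
  refine ⟨⟨?_, ?_⟩, by rw [hdet, htr]; constructor <;> intro <;> linarith⟩
  · -- embeddable → det > 0
    rintro ⟨Q, ⟨hQoff, hQrow⟩, hQM⟩
    have hq0 := hQrow 0
    have hq1 := hQrow 1
    rw [Fin.sum_univ_two] at hq0 hq1
    have e00 : Q 0 0 = -(Q 0 1) := by linarith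
    have e11 : Q 1 1 = -(Q 1 0) := by linarith
    have hQ : Q = !![-(Q 0 1), Q 0 1; Q 1 0, -(Q 1 0)] := by
      conv_lhs => rw [Matrix.eta_fin_two Q]
      rw [e00, e11]
    obtain ⟨p, q, hp0, hq0', hQ⟩ :
        ∃ p q : ℝ, 0 ≤ p ∧ 0 ≤ q ∧ Q = !![-p, p; q, -q] :=
      ⟨_, _, hQoff 0 1 (by decide), hQoff 1 0 (by decide), hQ⟩
    rw [hQ] at hQM
    rcases eq_or_lt_of_le (by linarith : (0:ℝ) ≤ p + q) with hs | hs
    · have hpz : p = 0 := by linarith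
      have hqz : q = 0 := by linarith
      rw [hpz, hqz] at hQM
      have hQz : (!![-(0:ℝ), 0; 0, -0] : Matrix (Fin 2) (Fin 2) ℝ) = 0 := by
        ext i j; fin_cases i <;> fin_cases j <;> simp
      rw [hQz, NormedSpace.exp_zero] at hQM
      have e01 : M 0 1 = 0 := by
        rw [← hQM]; simp [Matrix.one_apply]
      have e10 : M 1 0 = 0 := by
        rw [← hQM]; simp [Matrix.one_apply]
      rw [hdet, e01, e10]; norm_num
    · have hne : p + q ≠ 0 := ne_of_gt hs
      have hQP : (!![-p, p; q, -q] : Matrix (Fin 2) (Fin 2) ℝ)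
          = (-(p+q)) • !![p/(p+q), -(p/(p+q)); -(q/(p+q)), q/(p+q)] := by
        ext i j
        fin_cases i <;> fin_cases j <;> simp [Matrix.smul_apply] <;>
          field_simp <;> ring
      rw [hQP, exp_cP (-(p+q)) p q (p+q) rfl hne] at hQM
      have e01 : M 0 1 = -((Real.exp (-(p+q)) - 1) * (p/(p+q))) := by
        rw [← hQM]; simp
      have e10 : M 1 0 = -((Real.exp (-(p+q)) - 1) * (q/(p+q))) := by
        rw [← hQM]; simp
      have hps : p/(p+q) + q/(p+q) = 1 := by
        rw [← add_div, div_self hne]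
      have hmu : (Real.exp (-(p+q)) - 1) * (p/(p+q)) + (Real.exp (-(p+q)) - 1) * (q/(p+q))
          = Real.exp (-(p+q)) - 1 := by
        rw [← mul_add, hps, mul_one]
      rw [hdet, e01, e10]
      have := Real.exp_pos (-(p+q))
      linarith
  · -- det > 0 → embeddable
    intro hd
    rw [hdet] at hd
    have ha0 : 0 ≤ M 0 1 := hpos 0 1
    have hb0 : 0 ≤ M 1 0 := hpos 1 0
    rcases eq_or_lt_of_le (by linarith : (0:ℝ) ≤ M 0 1 + M 1 0) with hs | hs
    · refine ⟨0, ⟨fun i j _ => le_refl _, fun i => by simp⟩, ?_⟩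
      rw [NormedSpace.exp_zero]
      have e01 : M 0 1 = 0 := by linarith
      have e10 : M 1 0 = 0 := by linarith
      have e00 : M 0 0 = 1 := by linarith
      have e11 : M 1 1 = 1 := by linarith
      rw [Matrix.eta_fin_two M, e00, e01, e10, e11]
      ext i j; fin_cases i <;> fin_cases j <;> simp [Matrix.one_apply]
    · have hne : M 0 1 + M 1 0 ≠ 0 := ne_of_gt hs
      have h1s : (0:ℝ) < 1 - (M 0 1 + M 1 0) := by linarith
      set c := Real.log (1 - (M 0 1 + M 1 0)) with hc
      have hcle : c ≤ 0 := Real.log_nonpos (by linarith) (by linarith)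
      have hec : Real.exp c = 1 - (M 0 1 + M 1 0) := Real.exp_log h1s
      refine ⟨c • !![M 0 1/(M 0 1 + M 1 0), -(M 0 1/(M 0 1 + M 1 0));
          -(M 1 0/(M 0 1 + M 1 0)), M 1 0/(M 0 1 + M 1 0)], ⟨?_, ?_⟩, ?_⟩
      · intro i j hij
        fin_cases i <;> fin_cases j <;> simp [Matrix.smul_apply] at hij ⊢ <;>
          exact mul_nonpos_iff.2 (Or.inr ⟨hcle, div_nonneg (by assumption) hs.le⟩)
      · intro i
        fin_cases i <;> rw [Fin.sum_univ_two] <;> simp [Matrix.smul_apply]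
      · rw [exp_cP c (M 0 1) (M 1 0) (M 0 1 + M 1 0) rfl hne, hec]
        have hca : (1 - (M 0 1 + M 1 0) - 1) * (M 0 1/(M 0 1 + M 1 0)) = -(M 0 1) := by
          field_simp; ring
        have hcb : (1 - (M 0 1 + M 1 0) - 1) * (M 1 0/(M 0 1 + M 1 0)) = -(M 1 0) := by
          field_simp; ring
        rw [hca, hcb]
        have e00 : (1:ℝ) + -(M 0 1) = M 0 0 := by linarith
        have e11 : (1:ℝ) + -(M 1 0) = M 1 1 := by linarith
        rw [e00, e11, neg_neg, neg_neg]
        exact (Matrix.eta_fin_two M).symm
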